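/- Let Ω be an n×n complex matrix such that for all eigenvalues λ, μ of Ω and every nonzero integer m, λ − μ ≠ 2πim. Then the linear map d exp_Ω : X ↦ ∑'_{k≥0} (1/(k+1)!) • ad_Ω^k X on n×n complex matrices is bijective. -/

import Mathlib

open Polynomial Matrix

namespace DexpBijectiveAux

attribute [local instance] Matrix.normedAddCommGroup Matrix.normedSpace

noncomputable local instance instMatTopMetric {m : ℕ} : TopologicalSpace (Matrix (Fin m) (Fin m) ℂ) :=
  PseudoMetricSpace.toUniformSpace.toTopologicalSpace

variable {n : ℕ}

lemma mem_spectrum_iff_isRoot (Ω : Matrix (Fin n) (Fin n) ℂ) (lam : ℂ) :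
    lam ∈ spectrum ℂ Ω ↔ Ω.charpoly.IsRoot lam := by
  have halg : (algebraMap ℂ (Matrix (Fin n) (Fin n) ℂ)) lam = scalar (Fin n) lam := rfl
  have hev : Ω.charpoly.eval lam = (scalar (Fin n) lam - Ω).det := by
    rw [Matrix.charpoly, eval_det, matPolyEquiv_charmatrix]
    simp
  rw [spectrum.mem_iff, halg, Matrix.isUnit_iff_isUnit_det, isUnit_iff_ne_zero, not_not,
    Polynomial.IsRoot.def, hev]

lemma exists_diff (Ω w : Matrix (Fin n) (Fin n) ℂ) (ν : ℂ) (hw : w ≠ 0)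
    (heig : Ω * w - w * Ω = ν • w) :
    ∃ lam mu : ℂ, Ω.charpoly.IsRoot lam ∧ Ω.charpoly.IsRoot mu ∧ ν = lam - mu := by
  rcases Nat.eq_zero_or_pos n with hn | hn
  · exact absurd (by subst hn; ext i j; exact i.elim0) hw
  set B : Matrix (Fin n) (Fin n) ℂ := Ω - ν • 1 with hB
  have hBw : B * w = w * Ω := by
    rw [hB, sub_mul, smul_mul_assoc, one_mul, sub_eq_iff_eq_add]
    rw [sub_eq_iff_eq_add] at heig
    rw [heig]; exact add_comm _ _
  have hpow : ∀ k : ℕ, B ^ k * w = w * Ω ^ k := by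
    intro k; induction k with
    | zero => simp
    | succ k ih =>
        rw [pow_succ', mul_assoc, ih, ← mul_assoc, hBw, mul_assoc, ← pow_succ']
  have haev : ∀ q : ℂ[X], (aeval B q) * w = w * (aeval Ω q) := by
    intro q
    induction q using Polynomial.induction_on' with
    | add p q hp hq => rw [map_add, map_add, add_mul, mul_add, hp, hq]
    | monomial k a =>
        rw [aeval_monomial, aeval_monomial, mul_assoc, hpow, ← mul_assoc,
          Algebra.commutes, mul_assoc]
  have hM : (aeval B Ω.charpoly) * w = 0 := by
    rw [haev, Matrix.aeval_self_charpoly, mul_zero]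
  have hnu : ¬ IsUnit (aeval B Ω.charpoly) := by
    rintro ⟨u, hu'⟩
    apply hw
    calc w = (↑u⁻¹ * ↑u) * w := by rw [Units.inv_mul, one_mul]
    _ = ↑u⁻¹ * ((aeval B Ω.charpoly) * w) := by rw [mul_assoc, hu']
    _ = 0 := by rw [hM, mul_zero]
  set q : ℂ[X] := Ω.charpoly.comp (X - C ν) with hq
  have hBaev : aeval Ω (X - C ν) = B := by
    simp [hB, Algebra.algebraMap_eq_smul_one]
  have hq' : aeval Ω q = aeval B Ω.charpoly := by rw [hq, aeval_comp, hBaev]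
  have h0 : (0:ℂ) ∈ spectrum ℂ (aeval Ω q) := by
    rw [spectrum.zero_mem_iff, hq']; exact hnu
  have hdeg : 0 < q.degree := by
    rw [← Polynomial.natDegree_pos_iff_degree_pos, hq, Polynomial.natDegree_comp,
      Matrix.charpoly_natDegree_eq_dim, natDegree_X_sub_C, mul_one, Fintype.card_fin]
    exact hn
  rw [spectrum.map_polynomial_aeval_of_degree_pos Ω q hdeg] at h0
  obtain ⟨lam, hlam, heval⟩ := h0
  refine ⟨lam, lam - ν, (mem_spectrum_iff_isRoot Ω lam).1 hlam, ?_, by ring⟩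
  have he : q.eval lam = Ω.charpoly.eval (lam - ν) := by simp [hq, eval_comp]
  rw [IsRoot.def, ← he]
  exact heval


noncomputable def A (Ω : Matrix (Fin n) (Fin n) ℂ) :
    Matrix (Fin n) (Fin n) ℂ →L[ℂ] Matrix (Fin n) (Fin n) ℂ :=
  LinearMap.toContinuousLinearMap (LinearMap.mulLeft ℂ Ω - LinearMap.mulRight ℂ Ω)

lemma A_apply (Ω X : Matrix (Fin n) (Fin n) ℂ) : A Ω X = Ω * X - X * Ω := rfl

lemma iter_eq (Ω : Matrix (Fin n) (Fin n) ℂ) (k : ℕ) (X : Matrix (Fin n) (Fin n) ℂ) :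
    (fun Y : Matrix (Fin n) (Fin n) ℂ => Ω * Y - Y * Ω)^[k] X = (A Ω ^ k) X := by
  induction k with
  | zero => simp
  | succ k ih =>
      rw [Function.iterate_succ_apply', ih, pow_succ', ContinuousLinearMap.mul_apply, A_apply]

lemma apow_norm (Ω : Matrix (Fin n) (Fin n) ℂ) (k : ℕ) (X : Matrix (Fin n) (Fin n) ℂ) :
    ‖(A Ω ^ k) X‖ ≤ ‖A Ω‖ ^ k * ‖X‖ := by
  induction k with
  | zero => simp
  | succ k ih =>
      rw [pow_succ', ContinuousLinearMap.mul_apply]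
      calc ‖A Ω ((A Ω ^ k) X)‖ ≤ ‖A Ω‖ * ‖(A Ω ^ k) X‖ := (A Ω).le_opNorm _
      _ ≤ ‖A Ω‖ * (‖A Ω‖ ^ k * ‖X‖) := by
          exact mul_le_mul_of_nonneg_left ih (norm_nonneg _)
      _ = ‖A Ω‖ ^ (k+1) * ‖X‖ := by ring

lemma hsum (Ω X : Matrix (Fin n) (Fin n) ℂ) :
    Summable (fun k : ℕ => ((1 : ℝ) / (Nat.factorial (k + 1))) • ((A Ω ^ k) X)) := by
  apply Summable.of_norm_bounded ((Real.summable_pow_div_factorial ‖A Ω‖).mul_right ‖X‖)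
  intro k
  rw [norm_smul, Real.norm_eq_abs, abs_of_nonneg (by positivity)]
  calc ((1:ℝ) / (Nat.factorial (k+1))) * ‖(A Ω ^ k) X‖
      ≤ ((1:ℝ) / (Nat.factorial k)) * (‖A Ω‖ ^ k * ‖X‖) := by
        apply mul_le_mul
        · apply one_div_le_one_div_of_le
          · positivity
          · exact_mod_cast Nat.factorial_le (Nat.le_succ k)
        · exact apow_norm Ω k X
        · exact norm_nonneg _
        · positivity
      _ = ‖A Ω‖ ^ k / (Nat.factorial k) * ‖X‖ := by ring

noncomputable def Flin (Ω : Matrix (Fin n) (Fin n) ℂ) :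
    Matrix (Fin n) (Fin n) ℂ →ₗ[ℂ] Matrix (Fin n) (Fin n) ℂ where
  toFun X := ∑' k : ℕ, ((1 : ℝ) / (Nat.factorial (k + 1))) • ((A Ω ^ k) X)
  map_add' X Y := by
    have h1 : ∀ k : ℕ, ((1:ℝ) / (Nat.factorial (k+1))) • ((A Ω ^ k) (X + Y))
        = ((1:ℝ) / (Nat.factorial (k+1))) • ((A Ω ^ k) X)
          + ((1:ℝ) / (Nat.factorial (k+1))) • ((A Ω ^ k) Y) := by
      intro k; rw [map_add, smul_add]
    show (∑' k : ℕ, ((1:ℝ) / (Nat.factorial (k+1))) • ((A Ω ^ k) (X + Y))) = _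
    rw [tsum_congr h1, Summable.tsum_add (hsum Ω X) (hsum Ω Y)]
  map_smul' c X := by
    simp only [RingHom.id_apply]
    have h1 : ∀ k : ℕ, ((1:ℝ) / (Nat.factorial (k+1))) • ((A Ω ^ k) (c • X))
        = c • (((1:ℝ) / (Nat.factorial (k+1))) • ((A Ω ^ k) X)) := by
      intro k; rw [_root_.map_smul, smul_comm]
    simp only [h1]
    exact Summable.tsum_const_smul c (hsum Ω X)

lemma flin_comm (Ω X : Matrix (Fin n) (Fin n) ℂ) :
    Flin Ω (A Ω X) = A Ω (Flin Ω X) := by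
  show ∑' k : ℕ, ((1:ℝ) / (Nat.factorial (k+1))) • ((A Ω ^ k) (A Ω X)) = _
  rw [show (Flin Ω) X = ∑' k : ℕ, ((1:ℝ) / (Nat.factorial (k+1))) • ((A Ω ^ k) X) from rfl,
    (A Ω).map_tsum (hsum Ω X)]
  apply tsum_congr
  intro k
  rw [(A Ω).map_smul_of_tower]
  congr 1
  rw [← ContinuousLinearMap.mul_apply, ← ContinuousLinearMap.mul_apply, ← pow_succ, ← pow_succ']


noncomputable def S (ν : ℂ) : ℂ := ∑' k : ℕ, ν ^ k / (Nat.factorial (k + 1) : ℂ)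

lemma hsumS (ν : ℂ) : Summable (fun k : ℕ => ν ^ k / (Nat.factorial (k + 1) : ℂ)) := by
  apply Summable.of_norm_bounded (Real.summable_pow_div_factorial ‖ν‖)
  intro k
  rw [norm_div, norm_pow, Complex.norm_natCast]
  apply div_le_div_of_nonneg_left (by positivity) (by positivity)
  exact_mod_cast Nat.factorial_le (Nat.le_succ k)

lemma hsumExp (ν : ℂ) : Summable (fun k : ℕ => ν ^ k / (Nat.factorial k : ℂ)) := by
  apply Summable.of_norm_bounded (Real.summable_pow_div_factorial ‖ν‖)
  intro k
  rw [norm_div, norm_pow, Complex.norm_natCast]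

lemma S_root (ν : ℂ) (hS : S ν = 0) : ∃ m : ℤ, m ≠ 0 ∧ ν = 2 * Real.pi * Complex.I * m := by
  have hmul : ν * S ν = Complex.exp ν - 1 := by
    rw [S, ← tsum_mul_left]
    have h1 : ∀ k : ℕ, ν * (ν ^ k / ((Nat.factorial (k+1)) : ℂ))
        = ν ^ (k+1) / ((Nat.factorial (k+1)) : ℂ) := by
      intro k; rw [pow_succ]; ring
    rw [tsum_congr h1]
    have h3 : Complex.exp ν = ∑' k : ℕ, ν ^ k / ((Nat.factorial k : ℂ)) := by
      rw [Complex.exp_eq_exp_ℂ, NormedSpace.exp_eq_tsum_div]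
    rw [h3, Summable.tsum_eq_zero_add (hsumExp ν)]
    simp
  rw [hS, mul_zero] at hmul
  have hexp : Complex.exp ν = 1 := by
    have := hmul.symm; rwa [sub_eq_zero] at this
  obtain ⟨m, hm⟩ := Complex.exp_eq_one_iff.mp hexp
  refine ⟨m, ?_, by rw [hm]; ring⟩
  rintro rfl
  have hν : ν = 0 := by simpa using hm
  have hone : S ν = 1 := by
    rw [hν, S, tsum_eq_single 0]
    · simp
    · intro k hk; simp [zero_pow hk]
  rw [hone] at hS
  exact one_ne_zero hS

lemma flin_eigen (Ω w : Matrix (Fin n) (Fin n) ℂ) (ν : ℂ) (hA : A Ω w = ν • w) :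
    Flin Ω w = S ν • w := by
  show (∑' k : ℕ, ((1:ℝ) / (Nat.factorial (k+1))) • ((A Ω ^ k) w)) = _
  have hker : ∀ k : ℕ, (A Ω ^ k) w = ν ^ k • w := by
    intro k; induction k with
    | zero => simp
    | succ k ih =>
        rw [pow_succ', ContinuousLinearMap.mul_apply, ih, _root_.map_smul, hA, smul_smul,
          ← pow_succ]
  have h1 : ∀ k : ℕ, ((1:ℝ) / (Nat.factorial (k+1))) • ((A Ω ^ k) w)
      = (ν ^ k / ((Nat.factorial (k+1)) : ℂ)) • w := by
    intro k
    rw [hker, ← algebraMap_smul ℂ ((1:ℝ) / (Nat.factorial (k+1))) (ν ^ k • w), smul_smul]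
    congr 1
    simp [Complex.coe_algebraMap]
    ring
  rw [tsum_congr h1, Summable.tsum_smul_const (hsumS ν), S]


lemma flin_apply (Ω X : Matrix (Fin n) (Fin n) ℂ) :
    Flin Ω X = ∑' k : ℕ, ((1 : ℝ) / (Nat.factorial (k + 1))) •
      (fun Y : Matrix (Fin n) (Fin n) ℂ => Ω * Y - Y * Ω)^[k] X := by
  show (∑' k : ℕ, ((1:ℝ) / (Nat.factorial (k+1))) • ((A Ω ^ k) X)) = _
  exact tsum_congr fun k => by rw [iter_eq]

lemma flin_bijective (Ω : Matrix (Fin n) (Fin n) ℂ)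
    (h : ∀ lam mu : ℂ, Ω.charpoly.IsRoot lam → Ω.charpoly.IsRoot mu →
      ∀ m : ℤ, m ≠ 0 → lam - mu ≠ 2 * Real.pi * Complex.I * m) :
    Function.Bijective (Flin Ω) := by
  have hinj : Function.Injective (Flin Ω) := by
    rw [← LinearMap.ker_eq_bot]
    by_contra hK
    haveI : Nontrivial (LinearMap.ker (Flin Ω)) := Submodule.nontrivial_iff_ne_bot.mpr hK
    have hmaps : ∀ x ∈ LinearMap.ker (Flin Ω),
        (A Ω).toLinearMap x ∈ LinearMap.ker (Flin Ω) := by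
      intro x hx
      rw [LinearMap.mem_ker] at hx ⊢
      show Flin Ω (A Ω x) = 0
      rw [flin_comm, hx, map_zero]
    set g := ((A Ω).toLinearMap).restrict hmaps with hg
    obtain ⟨ν, hν⟩ := Module.End.exists_eigenvalue g
    obtain ⟨v, hv⟩ := hν.exists_hasEigenvector
    have hw0 : (v : Matrix (Fin n) (Fin n) ℂ) ≠ 0 := by
      intro hc
      exact hv.2 (by exact_mod_cast Subtype.ext hc)
    have hAw : A Ω (v : Matrix (Fin n) (Fin n) ℂ) = ν • (v : Matrix (Fin n) (Fin n) ℂ) := by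
      have := congrArg (Subtype.val) hv.apply_eq_smul
      simpa [hg, LinearMap.restrict_apply] using this
    have hFv : Flin Ω (v : Matrix (Fin n) (Fin n) ℂ) = 0 := v.2
    rw [flin_eigen Ω _ ν hAw] at hFv
    have hS : S ν = 0 := by
      rcases smul_eq_zero.mp hFv with h' | h'
      · exact h'
      · exact absurd h' hw0
    obtain ⟨m, hm0, hm⟩ := S_root ν hS
    obtain ⟨lam, mu, hlam, hmu, hd⟩ := exists_diff Ω _ ν hw0 (by rw [← A_apply, hAw])
    exact h lam mu hlam hmu m hm0 (by rw [← hd, hm])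
  exact ⟨hinj, LinearMap.injective_iff_surjective.mp hinj⟩

end DexpBijectiveAux

/-- If no difference of two eigenvalues of `Ω` equals `2πim` for a nonzero integer `m`, then
`d exp_Ω : X ↦ ∑' k, (1/(k+1)!) • ad_Ω^k X` is bijective on `n×n` complex matrices. -/
theorem dexp_bijective {n : ℕ} (Ω : Matrix (Fin n) (Fin n) ℂ)
    (h : ∀ lam mu : ℂ, Ω.charpoly.IsRoot lam → Ω.charpoly.IsRoot mu →
      ∀ m : ℤ, m ≠ 0 → lam - mu ≠ 2 * Real.pi * Complex.I * m) :
    Function.Bijective (fun X : Matrix (Fin n) (Fin n) ℂ =>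
      ∑' k : ℕ, ((1 : ℝ) / (Nat.factorial (k + 1))) •
        (fun Y : Matrix (Fin n) (Fin n) ℂ => Ω * Y - Y * Ω)^[k] X) := by
  have key : (fun X : Matrix (Fin n) (Fin n) ℂ =>
      ∑' k : ℕ, ((1 : ℝ) / (Nat.factorial (k + 1))) •
        (fun Y : Matrix (Fin n) (Fin n) ℂ => Ω * Y - Y * Ω)^[k] X)
      = ⇑(DexpBijectiveAux.Flin Ω) := by
    funext X
    exact (DexpBijectiveAux.flin_apply Ω X).symm
  rw [key]
  exact DexpBijectiveAux.flin_bijective Ω h
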